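/- Let ℓ be a prime and let Λ be a finite free ℤ_ℓ-module with a nondegenerate symmetric bilinear form. Define GSpin(Λ) = {z ∈ C⁺(Λ)^× : z Λ z⁻¹ = Λ}, where Λ is viewed inside the Clifford algebra C(Λ) and conjugation is taken in C(Λ ⊗ ℚ_ℓ). Then GSpin(Λ) = GSpin(Λ ⊗ ℚ_ℓ) ∩ C⁺(Λ)^×, where GSpin(Λ ⊗ ℚ_ℓ) = {z ∈ C⁺(Λ ⊗ ℚ_ℓ)^× : z (Λ ⊗ ℚ_ℓ) z⁻¹ = Λ ⊗ ℚ_ℓ}. -/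

import Mathlib

open CliffordAlgebra Submodule
set_option linter.unusedSectionVars false
set_option linter.unusedVariables false
set_option linter.unnecessarySimpa false
set_option maxHeartbeats 1000000

/-- The even Clifford algebra of a `ℤ_ℓ`-lattice `L`, realized inside the Clifford
algebra of the ambient `ℚ_ℓ`-quadratic space: the subring generated by the scalars
coming from `ℤ_ℓ` together with all products `ι x * ι y` with `x, y ∈ L`. -/
noncomputable def evenCliffordOfLattice (ℓ : ℕ) [Fact (Nat.Prime ℓ)]
    {V : Type*} [AddCommGroup V] [Module ℚ_[ℓ] V] [Module ℤ_[ℓ] V]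
    [IsScalarTower ℤ_[ℓ] ℚ_[ℓ] V]
    (Q : QuadraticForm ℚ_[ℓ] V) (L : Submodule ℤ_[ℓ] V) :
    Subring (CliffordAlgebra Q) :=
  Subring.closure
    (Set.range (fun r : ℤ_[ℓ] => algebraMap ℚ_[ℓ] (CliffordAlgebra Q) (r : ℚ_[ℓ])) ∪
      {c | ∃ x ∈ L, ∃ y ∈ L, c = ι Q x * ι Q y})


section Fock
variable {K : Type*} [Field K] {m : ℕ}

/-- toggle membership -/
def tg (i : Fin m) (S : Finset (Fin m)) : Finset (Fin m) :=
  if i ∈ S then S.erase i else insert i S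

/-- fermionic sign -/
def fsign (K : Type*) [Field K] (i : Fin m) (S : Finset (Fin m)) : K :=
  (-1) ^ (S.filter (· < i)).card

lemma tg_of_mem {i : Fin m} {S : Finset (Fin m)} (h : i ∈ S) : tg i S = S.erase i := if_pos h
lemma tg_of_not_mem {i : Fin m} {S : Finset (Fin m)} (h : i ∉ S) : tg i S = insert i S := if_neg h

lemma erase_comm' (i j : Fin m) (S : Finset (Fin m)) :
    (S.erase j).erase i = (S.erase i).erase j := by
  ext a; simp only [Finset.mem_erase]; tauto

lemma tg_tg_self (i : Fin m) (S : Finset (Fin m)) : tg i (tg i S) = S := by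
  by_cases hi : i ∈ S
  · rw [tg_of_mem hi, tg_of_not_mem (Finset.notMem_erase i S), Finset.insert_erase hi]
  · rw [tg_of_not_mem hi, tg_of_mem (Finset.mem_insert_self i S), Finset.erase_insert hi]

lemma mem_tg_of_ne {i j : Fin m} (hij : i ≠ j) (S : Finset (Fin m)) :
    i ∈ tg j S ↔ i ∈ S := by
  by_cases hj : j ∈ S
  · rw [tg_of_mem hj]; simp [hij]
  · rw [tg_of_not_mem hj]; simp [hij]

lemma tg_comm {i j : Fin m} (hij : i ≠ j) (S : Finset (Fin m)) :
    tg i (tg j S) = tg j (tg i S) := by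
  by_cases hi : i ∈ S <;> by_cases hj : j ∈ S
  · rw [tg_of_mem hj, tg_of_mem hi,
      tg_of_mem (Finset.mem_erase.mpr ⟨hij, hi⟩),
      tg_of_mem (Finset.mem_erase.mpr ⟨Ne.symm hij, hj⟩), erase_comm']
  · rw [tg_of_not_mem hj, tg_of_mem hi,
      tg_of_mem (Finset.mem_insert_of_mem hi),
      tg_of_not_mem (fun h => hj (Finset.mem_of_mem_erase h)),
      Finset.erase_insert_of_ne (Ne.symm hij)]
  · rw [tg_of_mem hj, tg_of_not_mem hi,
      tg_of_not_mem (fun h => hi (Finset.mem_of_mem_erase h)),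
      tg_of_mem (Finset.mem_insert_of_mem hj),
      Finset.erase_insert_of_ne hij]
  · rw [tg_of_not_mem hj, tg_of_not_mem hi,
      tg_of_not_mem (by simp [hij, hi]),
      tg_of_not_mem (by simp [Ne.symm hij, hj]),
      Finset.insert_comm]

lemma fsign_tg_self (i : Fin m) (S : Finset (Fin m)) :
    fsign K i (tg i S) = fsign K i S := by
  by_cases hi : i ∈ S
  · rw [tg_of_mem hi]
    unfold fsign
    have hni : i ∉ S.filter (· < i) := fun h => lt_irrefl i (Finset.mem_filter.mp h).2
    rw [Finset.filter_erase, Finset.erase_eq_of_notMem hni]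
  · rw [tg_of_not_mem hi]
    unfold fsign
    rw [Finset.filter_insert, if_neg (lt_irrefl i)]

lemma fsign_tg {i j : Fin m} (hij : j ≠ i) (S : Finset (Fin m)) :
    fsign K i (tg j S) = (if j < i then -1 else 1) * fsign K i S := by
  by_cases hj : j ∈ S
  · rw [tg_of_mem hj]
    unfold fsign
    rw [Finset.filter_erase]
    by_cases hlt : j < i
    · rw [if_pos hlt]
      have hjf : j ∈ S.filter (· < i) := Finset.mem_filter.mpr ⟨hj, hlt⟩
      rw [Finset.card_erase_of_mem hjf]
      have hpos : 0 < (S.filter (· < i)).card := Finset.card_pos.mpr ⟨j, hjf⟩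
      have hsub : ((S.filter (· < i)).card - 1) + 1 = (S.filter (· < i)).card :=
        Nat.succ_pred_eq_of_pos hpos
      conv_rhs => rw [← hsub]
      rw [pow_succ]
      ring
    · have hnj : j ∉ S.filter (· < i) := fun h => hlt (Finset.mem_filter.mp h).2
      rw [if_neg hlt, one_mul, Finset.erase_eq_of_notMem hnj]
  · rw [tg_of_not_mem hj]
    unfold fsign
    rw [Finset.filter_insert]
    by_cases hlt : j < i
    · rw [if_pos hlt, if_pos hlt,
        Finset.card_insert_of_notMem (fun h => hj (Finset.mem_filter.mp h).1), pow_succ]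
      ring
    · rw [if_neg hlt, if_neg hlt, one_mul]

lemma fsign_swap {i j : Fin m} (hij : i ≠ j) (S : Finset (Fin m)) :
    fsign K j S * fsign K i (tg j S) = -(fsign K i S * fsign K j (tg i S)) := by
  rw [fsign_tg (Ne.symm hij), fsign_tg hij]
  rcases lt_or_gt_of_ne hij with h | h
  · rw [if_neg (asymm h), if_pos h]; ring
  · rw [if_pos h, if_neg (asymm h)]; ring

lemma fsign_mul_self (i : Fin m) (S : Finset (Fin m)) :
    fsign K i S * fsign K i S = 1 := by
  unfold fsign
  rw [← pow_add]
  exact Even.neg_one_pow ⟨_, rfl⟩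

lemma basisSingleOne_apply' (S : Finset (Fin m)) :
    (Finsupp.basisSingleOne : Module.Basis (Finset (Fin m)) K _) S = Finsupp.single S (1:K) :=
  congrFun Finsupp.coe_basisSingleOne S

/-- annihilation+creation operator on the fermionic Fock space -/
noncomputable def fockOp (q : K) (i : Fin m) :
    (Finset (Fin m) →₀ K) →ₗ[K] (Finset (Fin m) →₀ K) :=
  Finsupp.basisSingleOne.constr K fun S =>
    (fsign K i S * (if i ∈ S then q else 1)) • Finsupp.single (tg i S) 1

lemma fockOp_single (q : K) (i : Fin m) (S : Finset (Fin m)) :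
    fockOp q i (Finsupp.single S 1) =
      (fsign K i S * (if i ∈ S then q else 1)) • Finsupp.single (tg i S) 1 := by
  rw [← basisSingleOne_apply', fockOp, Module.Basis.constr_basis]

lemma fockOp_sq (q : K) (i : Fin m) :
    fockOp (m := m) q i * fockOp q i = q • (1 : Module.End K (Finset (Fin m) →₀ K)) := by
  refine Finsupp.basisSingleOne.ext fun S => ?_
  rw [basisSingleOne_apply', Module.End.mul_apply, fockOp_single, map_smul, fockOp_single,
    smul_smul, tg_tg_self, fsign_tg_self, LinearMap.smul_apply, Module.End.one_apply]
  have hf := fsign_mul_self (K := K) i S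
  by_cases hi : i ∈ S
  · have hni : i ∉ tg i S := by rw [tg_of_mem hi]; exact Finset.notMem_erase i S
    rw [if_pos hi, if_neg hni]
    congr 1
    linear_combination q * hf
  · have hni : i ∈ tg i S := by rw [tg_of_not_mem hi]; exact Finset.mem_insert_self i S
    rw [if_neg hi, if_pos hni]
    congr 1
    linear_combination q * hf

lemma fockOp_anticomm (q q' : K) {i j : Fin m} (hij : i ≠ j) :
    fockOp (m := m) q i * fockOp q' j + fockOp q' j * fockOp q i = 0 := by
  refine Finsupp.basisSingleOne.ext fun S => ?_
  rw [basisSingleOne_apply', LinearMap.add_apply, Module.End.mul_apply, Module.End.mul_apply,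
    fockOp_single, map_smul, fockOp_single, fockOp_single, map_smul, fockOp_single,
    smul_smul, smul_smul, tg_comm hij, ← add_smul, LinearMap.zero_apply]
  convert zero_smul K _
  simp only [mem_tg_of_ne hij S, mem_tg_of_ne (Ne.symm hij) S]
  have hs := fsign_swap (K := K) hij S
  linear_combination ((if i ∈ S then q else 1) * (if j ∈ S then q' else 1)) * hs

lemma fock_sum_sq [CharZero K] (c q : Fin m → K) :
    (∑ i, c i • fockOp (m := m) (q i) i) * (∑ j, c j • fockOp (q j) j)
      = (∑ i, c i * c i * q i) • (1 : Module.End K (Finset (Fin m) →₀ K)) := by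
  classical
  set A := fun i => fockOp (m := m) (q i) i with hA
  set g := fun i j => (c i * c j) • (A i * A j) with hg
  have hmul : (∑ i, c i • A i) * (∑ j, c j • A j) = ∑ i, ∑ j, g i j := by
    rw [Finset.sum_mul_sum]
    refine Finset.sum_congr rfl fun i _ => Finset.sum_congr rfl fun j _ => ?_
    rw [hg, smul_mul_smul_comm]
  have hsplit : ∀ i : Fin m, (∑ j, g i j) = g i i + ∑ j ∈ Finset.univ.erase i, g i j :=
    fun i => (Finset.add_sum_erase _ (g i) (Finset.mem_univ i)).symm
  rw [hmul]
  simp_rw [hsplit]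
  rw [Finset.sum_add_distrib]
  have hOswap : (∑ i, ∑ j ∈ Finset.univ.erase i, g i j)
      = ∑ i, ∑ j ∈ Finset.univ.erase i, g j i :=
    Finset.sum_comm' (fun i j => by
      simp [Finset.mem_erase, and_comm, ne_comm, eq_comm])
  have hOzero : (∑ i, ∑ j ∈ Finset.univ.erase i, g i j) = 0 := by
    have hOO : (∑ i, ∑ j ∈ Finset.univ.erase i, g i j)
        + (∑ i, ∑ j ∈ Finset.univ.erase i, g i j) = 0 := by
      nth_rewrite 2 [hOswap]
      rw [← Finset.sum_add_distrib]
      refine Finset.sum_eq_zero fun i _ => ?_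
      rw [← Finset.sum_add_distrib]
      refine Finset.sum_eq_zero fun j hj => ?_
      have hji : j ≠ i := (Finset.mem_erase.mp hj).1
      show (c i * c j) • (A i * A j) + (c j * c i) • (A j * A i) = 0
      rw [mul_comm (c j) (c i), ← smul_add, fockOp_anticomm (q i) (q j) (Ne.symm hji), smul_zero]
    have h2 : (2 : K) • (∑ i, ∑ j ∈ Finset.univ.erase i, g i j) = 0 := by
      rw [two_smul]; exact hOO
    rcases smul_eq_zero.mp h2 with h | h
    · exact absurd h two_ne_zero
    · exact h
  rw [hOzero, add_zero]
  rw [Finset.sum_smul]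
  refine Finset.sum_congr rfl fun i _ => ?_
  rw [hg]
  show (c i * c i) • (A i * A i) = _
  rw [hA]
  show (c i * c i) • (fockOp (q i) i * fockOp (q i) i) = _
  rw [fockOp_sq, smul_smul]

lemma fsign_of_min {i : Fin m} {S : Finset (Fin m)} (h : ∀ x ∈ S, ¬ x < i) :
    fsign K i S = 1 := by
  unfold fsign
  rw [Finset.filter_eq_empty_iff.mpr h, Finset.card_empty, pow_zero]

end Fock

section Aux
variable {ℓ : ℕ} [Fact (Nat.Prime ℓ)]
    {V : Type*} [AddCommGroup V] [Module ℚ_[ℓ] V] [Module ℤ_[ℓ] V]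
    [IsScalarTower ℤ_[ℓ] ℚ_[ℓ] V]
    (Q : QuadraticForm ℚ_[ℓ] V)

noncomputable def cliffIntAlgebra : Algebra ℤ_[ℓ] (CliffordAlgebra Q) :=
  RingHom.toAlgebra' ((algebraMap ℚ_[ℓ] (CliffordAlgebra Q)).comp (algebraMap ℤ_[ℓ] ℚ_[ℓ]))
    (fun c x => by simpa using Algebra.commutes ((c : ℚ_[ℓ])) x)


def cliffIntTower : IsScalarTower ℤ_[ℓ] ℚ_[ℓ] (CliffordAlgebra Q) :=
  IsScalarTower.of_algebraMap_eq fun _ => rfl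


/-- ordered monomial in the `ι`-images of a family. -/
noncomputable def cM {k : ℕ} (v : Fin k → V) (S : Finset (Fin k)) : CliffordAlgebra Q :=
  ((S.sort (· ≤ ·)).map fun i => ι Q (v i)).prod

variable {k : ℕ} (v : Fin k → V)

@[simp] lemma cM_empty : cM Q v ∅ = 1 := by simp [cM]

@[simp] lemma cM_singleton (i : Fin k) : cM Q v {i} = ι Q (v i) := by simp [cM]

lemma cM_insert {j : Fin k} {S : Finset (Fin k)} (h : ∀ x ∈ S, j < x) :
    cM Q v (insert j S) = ι Q (v j) * cM Q v S := by
  rw [cM, Finset.sort_insert (· ≤ ·) (fun b hb => (h b hb).le)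
    (fun hj => lt_irrefl j (h j hj))]
  simp [cM]

lemma cM_min_decomp {S : Finset (Fin k)} (hS : S.Nonempty) :
    cM Q v S = ι Q (v (S.min' hS)) * cM Q v (S.erase (S.min' hS)) := by
  rw [← cM_insert Q v (fun x hx => ?_), Finset.insert_erase (S.min'_mem hS)]
  exact lt_of_le_of_ne (S.min'_le x (S.mem_of_mem_erase hx)) (Ne.symm (Finset.ne_of_mem_erase hx))

lemma coe_smul_cliff (r : ℤ_[ℓ]) (c : CliffordAlgebra Q) :
    ((r : ℚ_[ℓ])) • c = r • c := algebraMap_smul ℚ_[ℓ] r c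

lemma lcore (hQv : ∀ i, ∃ r : ℤ_[ℓ], Q (v i) = (r : ℚ_[ℓ]))
    (hpol : ∀ i j, ∃ r : ℤ_[ℓ], QuadraticMap.polar Q (v i) (v j) = (r : ℚ_[ℓ])) :
    ∀ (S : Finset (Fin k)) (i : Fin k),
      ι Q (v i) * cM Q v S ∈ span ℤ_[ℓ] (cM Q v '' {T | T ⊆ insert i S}) := by
  intro S
  induction S using Finset.strongInduction with
  | _ S IH =>
    intro i
    rcases S.eq_empty_or_nonempty with rfl | hS
    · rw [cM_empty, mul_one, ← cM_singleton Q v i]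
      exact subset_span ⟨{i}, by simp, rfl⟩
    · set j := S.min' hS with hj
      have hjS : j ∈ S := S.min'_mem hS
      set S' := S.erase j with hS'def
      have hsub : S' ⊂ S := Finset.erase_ssubset hjS
      have hdec : cM Q v S = ι Q (v j) * cM Q v S' := cM_min_decomp Q v hS
      have hS'lt : ∀ x ∈ S', j < x := fun x hx =>
        lt_of_le_of_ne (S.min'_le x (S.mem_of_mem_erase hx)) (Ne.symm (Finset.ne_of_mem_erase hx))
      have hS'sub : (S' : Set (Fin k)) ⊆ S := fun t ht => S.mem_of_mem_erase ht
      rcases lt_trichotomy i j with hij | rfl | hij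
      · have hilt : ∀ x ∈ S, i < x := fun x hx => lt_of_lt_of_le hij (S.min'_le x hx)
        rw [← cM_insert Q v hilt]
        exact subset_span ⟨insert i S, fun t ht => ht, rfl⟩
      · obtain ⟨r, hr⟩ := hQv j
        rw [hdec, ← mul_assoc, ι_sq_scalar, hr, ← Algebra.smul_def, coe_smul_cliff]
        exact Submodule.smul_mem _ _ (subset_span
          ⟨S', fun t ht => Finset.mem_insert_of_mem (hS'sub ht), rfl⟩)
      · obtain ⟨r, hr⟩ := hpol i j
        rw [hdec, ← mul_assoc, ι_mul_ι_comm, hr, sub_mul]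
        refine Submodule.sub_mem _ ?_ ?_
        · rw [← Algebra.smul_def, coe_smul_cliff]
          exact Submodule.smul_mem _ _ (subset_span
            ⟨S', fun t ht => Finset.mem_insert_of_mem (hS'sub ht), rfl⟩)
        · rw [mul_assoc]
          have hIH := IH S' hsub i
          have hmap := Submodule.apply_mem_span_image_of_mem_span
            ((LinearMap.mulLeft ℚ_[ℓ] (ι Q (v j))).restrictScalars ℤ_[ℓ]) hIH
          have hle : span ℤ_[ℓ] (((LinearMap.mulLeft ℚ_[ℓ] (ι Q (v j))).restrictScalars ℤ_[ℓ])
              '' (cM Q v '' {T | T ⊆ insert i S'})) ≤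
              span ℤ_[ℓ] (cM Q v '' {T | T ⊆ insert i S}) := by
            refine Submodule.span_le.mpr ?_
            rintro _ ⟨_, ⟨T, hT, rfl⟩, rfl⟩
            simp only [LinearMap.coe_restrictScalars, LinearMap.mulLeft_apply]
            have hjT : ∀ x ∈ T, j < x := by
              intro x hx
              rcases Finset.mem_insert.mp (hT hx) with rfl | hx'
              · exact hij
              · exact hS'lt x hx'
            rw [← cM_insert Q v hjT]
            refine subset_span ⟨insert j T, ?_, rfl⟩
            intro t ht
            rcases Finset.mem_insert.mp ht with rfl | ht'
            · exact Finset.mem_insert_of_mem hjS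
            · rcases Finset.mem_insert.mp (hT ht') with rfl | ht''
              · exact Finset.mem_insert_self _ _
              · exact Finset.mem_insert_of_mem (hS'sub ht'')
          have := hle hmap
          simpa using this

lemma mulLeft_gen_mem (hQv : ∀ i, ∃ r : ℤ_[ℓ], Q (v i) = (r : ℚ_[ℓ]))
    (hpol : ∀ i j, ∃ r : ℤ_[ℓ], QuadraticMap.polar Q (v i) (v j) = (r : ℚ_[ℓ]))
    (i : Fin k) {c : CliffordAlgebra Q}
    (hc : c ∈ span ℤ_[ℓ] (Set.range (cM Q v))) :
    ι Q (v i) * c ∈ span ℤ_[ℓ] (Set.range (cM Q v)) := by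
  induction hc using Submodule.span_induction with
  | mem x hx =>
    obtain ⟨S, rfl⟩ := hx
    exact Submodule.span_mono (Set.image_subset_range _ _) (lcore Q v hQv hpol S i)
  | zero => simpa using Submodule.zero_mem _
  | add x y _ _ hx hy => rw [mul_add]; exact Submodule.add_mem _ hx hy
  | smul r x _ hx => rw [mul_smul_comm]; exact Submodule.smul_mem _ _ hx

lemma monomial_mul_mem (hQv : ∀ i, ∃ r : ℤ_[ℓ], Q (v i) = (r : ℚ_[ℓ]))
    (hpol : ∀ i j, ∃ r : ℤ_[ℓ], QuadraticMap.polar Q (v i) (v j) = (r : ℚ_[ℓ]))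
    (S : Finset (Fin k)) {c : CliffordAlgebra Q}
    (hc : c ∈ span ℤ_[ℓ] (Set.range (cM Q v))) :
    cM Q v S * c ∈ span ℤ_[ℓ] (Set.range (cM Q v)) := by
  induction S using Finset.strongInduction with
  | _ S IH =>
    rcases S.eq_empty_or_nonempty with rfl | hS
    · simpa using hc
    · rw [cM_min_decomp Q v hS, mul_assoc]
      exact mulLeft_gen_mem Q v hQv hpol _
        (IH _ (Finset.erase_ssubset (S.min'_mem hS)))

lemma mem_mul_mem (hQv : ∀ i, ∃ r : ℤ_[ℓ], Q (v i) = (r : ℚ_[ℓ]))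
    (hpol : ∀ i j, ∃ r : ℤ_[ℓ], QuadraticMap.polar Q (v i) (v j) = (r : ℚ_[ℓ]))
    {a c : CliffordAlgebra Q}
    (ha : a ∈ span ℤ_[ℓ] (Set.range (cM Q v)))
    (hc : c ∈ span ℤ_[ℓ] (Set.range (cM Q v))) :
    a * c ∈ span ℤ_[ℓ] (Set.range (cM Q v)) := by
  induction ha using Submodule.span_induction with
  | mem x hx => obtain ⟨S, rfl⟩ := hx; exact monomial_mul_mem Q v hQv hpol S hc
  | zero => simpa using Submodule.zero_mem _
  | add x y _ _ hx hy => rw [add_mul]; exact Submodule.add_mem _ hx hy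
  | smul r x _ hx => rw [smul_mul_assoc]; exact Submodule.smul_mem _ _ hx

lemma one_mem_N : (1 : CliffordAlgebra Q) ∈ span ℤ_[ℓ] (Set.range (cM Q v)) :=
  cM_empty Q v ▸ subset_span (Set.mem_range_self _)

lemma span_top_monomials (hQv : ∀ i, ∃ r : ℤ_[ℓ], Q (v i) = (r : ℚ_[ℓ]))
    (hpol : ∀ i j, ∃ r : ℤ_[ℓ], QuadraticMap.polar Q (v i) (v j) = (r : ℚ_[ℓ]))
    (hv : span ℚ_[ℓ] (Set.range v) = ⊤) :
    span ℚ_[ℓ] (Set.range (cM Q v)) = ⊤ := by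
  set NQ := span ℚ_[ℓ] (Set.range (cM Q v)) with hNQdef
  have hgen : ∀ (i : Fin k), ∀ c ∈ NQ, ι Q (v i) * c ∈ NQ := by
    intro i c hc
    induction hc using Submodule.span_induction with
    | mem x hx =>
      obtain ⟨S, rfl⟩ := hx
      have h1 := lcore Q v hQv hpol S i
      have h2 : span ℤ_[ℓ] (cM Q v '' {T | T ⊆ insert i S}) ≤
          (span ℚ_[ℓ] (cM Q v '' {T | T ⊆ insert i S})).restrictScalars ℤ_[ℓ] :=
        Submodule.span_le_restrictScalars _ _ _
      exact Submodule.span_mono (Set.image_subset_range _ _) (h2 h1)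
    | zero => simpa using Submodule.zero_mem _
    | add x y _ _ hx hy => rw [mul_add]; exact Submodule.add_mem _ hx hy
    | smul r x _ hx => rw [mul_smul_comm]; exact Submodule.smul_mem _ _ hx
  have hvec : ∀ (x : V), ∀ c ∈ NQ, ι Q x * c ∈ NQ := by
    intro x
    have hx : x ∈ span ℚ_[ℓ] (Set.range v) := hv ▸ Submodule.mem_top
    induction hx using Submodule.span_induction with
    | mem y hy => obtain ⟨i, rfl⟩ := hy; exact hgen i
    | zero => intro c hc; simpa using Submodule.zero_mem _
    | add y y' _ _ hy hy' =>
      intro c hc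
      rw [map_add, add_mul]
      exact Submodule.add_mem _ (hy c hc) (hy' c hc)
    | smul q y _ hy =>
      intro c hc
      rw [map_smul, smul_mul_assoc]
      exact Submodule.smul_mem _ _ (hy c hc)
  have hall : ∀ a : CliffordAlgebra Q, ∀ c ∈ NQ, a * c ∈ NQ := by
    intro a
    induction a using CliffordAlgebra.induction with
    | algebraMap r =>
      intro c hc
      rw [← Algebra.smul_def]
      exact Submodule.smul_mem _ _ hc
    | ι x => exact hvec x
    | mul a b ha hb =>
      intro c hc
      rw [mul_assoc]
      exact ha _ (hb c hc)
    | add a b ha hb =>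
      intro c hc
      rw [add_mul]
      exact Submodule.add_mem _ (ha c hc) (hb c hc)
  rw [eq_top_iff]
  intro a _
  have h1 : (1 : CliffordAlgebra Q) ∈ NQ := subset_span (cM_empty Q v ▸ Set.mem_range_self ∅)
  simpa using hall a 1 h1

open Module in
lemma finrank_clifford [FiniteDimensional ℚ_[ℓ] V]
    (hQv : ∀ i, ∃ r : ℤ_[ℓ], Q (v i) = (r : ℚ_[ℓ]))
    (hpol : ∀ i j, ∃ r : ℤ_[ℓ], QuadraticMap.polar Q (v i) (v j) = (r : ℚ_[ℓ]))
    (hv : span ℚ_[ℓ] (Set.range v) = ⊤) (hk : k = finrank ℚ_[ℓ] V) :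
    finrank ℚ_[ℓ] (CliffordAlgebra Q) = 2 ^ k := by
  classical
  have htop := span_top_monomials Q v hQv hpol hv
  have hup : finrank ℚ_[ℓ] (CliffordAlgebra Q) ≤ 2 ^ k := by
    have h := finrank_le_of_span_eq_top htop
    simpa [Fintype.card_finset, Fintype.card_fin] using h
  have hfinC : Module.Finite ℚ_[ℓ] (CliffordAlgebra Q) := by
    constructor
    refine ⟨Finset.univ.image (cM Q v), ?_⟩
    rw [Finset.coe_image, Finset.coe_univ, Set.image_univ, htop]
  haveI := hfinC
  haveI : Invertible (2 : ℚ_[ℓ]) := invertibleOfNonzero two_ne_zero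
  have hsymm : (QuadraticMap.polarBilin Q).IsSymm := ⟨fun x y => by
    simp only [QuadraticMap.polarBilin_apply_apply, RingHom.id_apply]
    exact QuadraticMap.polar_comm _ x y⟩
  set m := finrank ℚ_[ℓ] V with hm
  obtain ⟨w, hw⟩ := LinearMap.BilinForm.exists_orthogonal_basis hsymm
  have horth : ∀ i j : Fin m, i ≠ j → QuadraticMap.polar Q (w i) (w j) = 0 := by
    intro i j hij
    have h := hw hij
    refine QuadraticMap.IsOrtho.polar_eq_zero ?_
    exact QuadraticMap.isOrtho_polarBilin.mp h
  set T : V →ₗ[ℚ_[ℓ]] Module.End ℚ_[ℓ] (Finset (Fin m) →₀ ℚ_[ℓ]) :=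
    w.constr ℚ_[ℓ] (fun i => fockOp (Q (w i)) i) with hTdef
  have hT : ∀ x, T x * T x
      = algebraMap ℚ_[ℓ] (Module.End ℚ_[ℓ] (Finset (Fin m) →₀ ℚ_[ℓ])) (Q x) := by
    intro x
    have hTx : T x = ∑ i, w.equivFun x i • fockOp (Q (w i)) i :=
      Basis.constr_apply_fintype ℚ_[ℓ] w _ x
    rw [hTx, fock_sum_sq]
    have hx : Q x = ∑ i, w.equivFun x i * w.equivFun x i * Q (w i) := by
      conv_lhs => rw [← w.sum_equivFun x]
      rw [QuadraticMap.map_sum]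
      have hz : (∑ ij ∈ Finset.univ.sym2 with ¬ ij.IsDiag,
          QuadraticMap.polarSym2 Q (Sym2.map (fun i => w.equivFun x i • w i) ij)) = 0 := by
        refine Finset.sum_eq_zero fun ij hij => ?_
        induction ij using Sym2.ind with
        | _ i j =>
          have hne : i ≠ j := by
            intro h
            exact (Finset.mem_filter.mp hij).2 (by simp [h])
          rw [Sym2.map_mk, QuadraticMap.polarSym2_sym2Mk]
          beta_reduce
          rw [QuadraticMap.polar_smul_left, QuadraticMap.polar_smul_right,
            horth i j hne]
          simp
      rw [hz, add_zero]
      refine Finset.sum_congr rfl fun i _ => ?_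
      rw [QuadraticMap.map_smul]
      simp [mul_assoc]
    rw [← hx, Algebra.algebraMap_eq_smul_one]
  set ρ := CliffordAlgebra.lift Q ⟨T, hT⟩ with hρ
  set φ : CliffordAlgebra Q →ₗ[ℚ_[ℓ]] (Finset (Fin m) →₀ ℚ_[ℓ]) :=
    { toFun := fun a => ρ a (Finsupp.single ∅ 1)
      map_add' := fun a b => by simp
      map_smul' := fun r a => by simp } with hφdef
  have hφ : ∀ S : Finset (Fin m), φ (cM Q (⇑w) S) = Finsupp.single S 1 := by
    intro S
    induction S using Finset.strongInduction with
    | _ S IH =>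
      rcases S.eq_empty_or_nonempty with rfl | hS
      · show ρ (cM Q (⇑w) ∅) (Finsupp.single ∅ 1) = _
        rw [cM_empty, map_one, Module.End.one_apply]
      · set j := S.min' hS with hj
        set S' := S.erase j with hS'
        have hjlt : ∀ x ∈ S', j < x := fun x hx =>
          lt_of_le_of_ne (S.min'_le x (S.mem_of_mem_erase hx))
            (Ne.symm (Finset.ne_of_mem_erase hx))
        have hdec : cM Q (⇑w) S = ι Q (w j) * cM Q (⇑w) S' := cM_min_decomp Q (⇑w) hS
        have hIH := IH S' (Finset.erase_ssubset (S.min'_mem hS))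
        show ρ (cM Q (⇑w) S) (Finsupp.single ∅ 1) = _
        rw [hdec, map_mul, Module.End.mul_apply]
        have : ρ (cM Q (⇑w) S') (Finsupp.single ∅ 1) = Finsupp.single S' 1 := hIH
        rw [this, hρ, CliffordAlgebra.lift_ι_apply, hTdef, Basis.constr_basis,
          fockOp_single]
        have hjn : j ∉ S' := Finset.notMem_erase _ _
        have hjS : j ∈ S := S.min'_mem hS
        rw [if_neg hjn, fsign_of_min (fun x hx => not_lt_of_gt (hjlt x hx)), one_mul,
          one_smul, tg_of_not_mem hjn, hS', Finset.insert_erase hjS]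
  have hli : LinearIndependent ℚ_[ℓ] (fun S : Finset (Fin m) => cM Q (⇑w) S) := by
    apply LinearIndependent.of_comp φ
    have he : (⇑φ ∘ fun S : Finset (Fin m) => cM Q (⇑w) S)
        = fun S => Finsupp.single S (1 : ℚ_[ℓ]) := funext fun S => hφ S
    rw [he, ← Finsupp.coe_basisSingleOne]
    exact (Finsupp.basisSingleOne).linearIndependent
  have hlow : 2 ^ m ≤ finrank ℚ_[ℓ] (CliffordAlgebra Q) := by
    have h := hli.fintype_card_le_finrank
    simpa [Fintype.card_finset, Fintype.card_fin] using h
  rw [hk] at hup ⊢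
  exact le_antisymm hup hlow

open Module in
lemma key_extraction [FiniteDimensional ℚ_[ℓ] V]
    (L : Submodule ℤ_[ℓ] V) (hfree : Module.Free ℤ_[ℓ] ↥L) (hfin : Module.Finite ℤ_[ℓ] ↥L)
    (hfull : span ℚ_[ℓ] (L : Set V) = ⊤)
    (hQL : ∀ x ∈ L, ∃ r : ℤ_[ℓ], Q x = (r : ℚ_[ℓ])) :
    ∃ N : Submodule ℤ_[ℓ] (CliffordAlgebra Q),
      (↑(evenCliffordOfLattice ℓ Q L) : Set (CliffordAlgebra Q)) ⊆ ↑N ∧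
      (∀ x ∈ L, ι Q x ∈ N) ∧
      (∀ a ∈ N, ∀ c ∈ N, a * c ∈ N) ∧
      (∀ y : V, ι Q y ∈ N → y ∈ L) := by
  classical
  haveI := hfree; haveI := hfin
  haveI : NoZeroSMulDivisors ℤ_[ℓ] ℚ_[ℓ] :=
    ⟨fun {c x} h => by
      rw [Algebra.smul_def, mul_eq_zero] at h
      rcases h with h | h
      · exact Or.inl ((map_eq_zero_iff _ (IsFractionRing.injective ℤ_[ℓ] ℚ_[ℓ])).mp h)
      · exact Or.inr h⟩
  let b0 := Module.Free.chooseBasis ℤ_[ℓ] ↥L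
  set n := Fintype.card (Module.Free.ChooseBasisIndex ℤ_[ℓ] ↥L) with hn
  let b : Basis (Fin n) ℤ_[ℓ] ↥L := b0.reindex (Fintype.equivFin _)
  let v : Fin n → V := fun i => ((b i : ↥L) : V)
  have hvL : ∀ i, v i ∈ L := fun i => (b i).2
  have hVsm : ∀ (t : ℤ_[ℓ]) (u : V), ((t : ℚ_[ℓ])) • u = t • u :=
    fun t u => algebraMap_smul ℚ_[ℓ] t u
  have hspanZ : span ℤ_[ℓ] (Set.range v) = L := by
    have h1 : Submodule.map L.subtype ⊤ = L := by
      rw [Submodule.map_top, Submodule.range_subtype]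
    rw [← h1, ← b.span_eq, Submodule.map_span]
    congr 1
    rw [← Set.range_comp]
    rfl
  have hliZ : LinearIndependent ℤ_[ℓ] v := by
    have h2 := b.linearIndependent.map' L.subtype (Submodule.ker_subtype L)
    exact h2
  have hliQ : LinearIndependent ℚ_[ℓ] v :=
    hliZ.localization ℚ_[ℓ] (nonZeroDivisors ℤ_[ℓ])
  have hspanQ : span ℚ_[ℓ] (Set.range v) = ⊤ := by
    rw [eq_top_iff, ← hfull]
    refine span_le.mpr fun x hx => ?_
    have hxZ : x ∈ span ℤ_[ℓ] (Set.range v) := hspanZ ▸ hx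
    exact Submodule.span_le_restrictScalars ℤ_[ℓ] ℚ_[ℓ] _ hxZ
  let bV : Basis (Fin n) ℚ_[ℓ] V := Basis.mk hliQ (le_of_eq hspanQ.symm)
  have hbV : ∀ i, bV i = v i := fun i => Basis.mk_apply _ _ i
  have hQv : ∀ i, ∃ r : ℤ_[ℓ], Q (v i) = (r : ℚ_[ℓ]) := fun i => hQL (v i) (hvL i)
  have hpol : ∀ i j, ∃ r : ℤ_[ℓ], QuadraticMap.polar Q (v i) (v j) = (r : ℚ_[ℓ]) := by
    intro i j
    obtain ⟨r1, h1⟩ := hQL _ (L.add_mem (hvL i) (hvL j))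
    obtain ⟨r2, h2⟩ := hQL _ (hvL i)
    obtain ⟨r3, h3⟩ := hQL _ (hvL j)
    refine ⟨r1 - r2 - r3, ?_⟩
    rw [QuadraticMap.polar, h1, h2, h3]
    push_cast
    ring
  set N := span ℤ_[ℓ] (Set.range (cM Q v)) with hNdef
  have honeN : (1 : CliffordAlgebra Q) ∈ N := one_mem_N Q v
  have hιmul : ∀ x ∈ L, ∀ c ∈ N, ι Q x * c ∈ N := by
    intro x hx
    have hxZ : x ∈ span ℤ_[ℓ] (Set.range v) := hspanZ ▸ hx
    clear hx
    induction hxZ using Submodule.span_induction with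
    | mem y hy =>
      obtain ⟨i, rfl⟩ := hy
      exact fun c hc => mulLeft_gen_mem Q v hQv hpol i hc
    | zero => intro c hc; rw [map_zero, zero_mul]; exact Submodule.zero_mem _
    | add y y' hy hy' hy1 hy2 =>
      intro c hc
      rw [map_add, add_mul]
      exact Submodule.add_mem _ (hy1 c hc) (hy2 c hc)
    | smul t y hy hy1 =>
      intro c hc
      rw [LinearMap.map_smul_of_tower, smul_mul_assoc]
      exact Submodule.smul_mem _ _ (hy1 c hc)
  have hιN : ∀ x ∈ L, ι Q x ∈ N := fun x hx => by
    have h := hιmul x hx 1 honeN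
    rwa [mul_one] at h
  have hevenN : (↑(evenCliffordOfLattice ℓ Q L) : Set (CliffordAlgebra Q)) ⊆ ↑N := by
    intro x hx
    have hx' : x ∈ Subring.closure
        (Set.range (fun r : ℤ_[ℓ] => algebraMap ℚ_[ℓ] (CliffordAlgebra Q) (r : ℚ_[ℓ])) ∪
          {c | ∃ a ∈ L, ∃ y ∈ L, c = ι Q a * ι Q y}) := hx
    clear hx
    induction hx' using Subring.closure_induction with
    | mem c hc =>
      rcases hc with ⟨r, rfl⟩ | ⟨a, ha, y, hy, rfl⟩
      · show algebraMap ℚ_[ℓ] (CliffordAlgebra Q) (r : ℚ_[ℓ]) ∈ N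
        rw [Algebra.algebraMap_eq_smul_one, coe_smul_cliff]
        exact Submodule.smul_mem _ _ honeN
      · have h := hιmul a ha (ι Q y) (hιN y hy)
        exact h
    | zero => exact Submodule.zero_mem _
    | one => exact honeN
    | add a y _ _ ha hy => exact Submodule.add_mem _ ha hy
    | neg a _ ha => exact Submodule.neg_mem _ ha
    | mul a y _ _ ha hy => exact mem_mul_mem Q v hQv hpol ha hy
  refine ⟨N, hevenN, hιN, fun a ha c hc => mem_mul_mem Q v hQv hpol ha hc, ?_⟩
  intro y hy
  have hk : n = finrank ℚ_[ℓ] V := by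
    rw [finrank_eq_card_basis bV, Fintype.card_fin]
  have hcard : Fintype.card (Finset (Fin n)) = finrank ℚ_[ℓ] (CliffordAlgebra Q) := by
    rw [Fintype.card_finset, Fintype.card_fin, finrank_clifford Q v hQv hpol hspanQ hk]
  let EB : Basis (Finset (Fin n)) ℚ_[ℓ] (CliffordAlgebra Q) :=
    basisOfTopLeSpanOfCardEqFinrank (cM Q v)
      (le_of_eq (span_top_monomials Q v hQv hpol hspanQ).symm) hcard
  have hEB : ⇑EB = cM Q v := coe_basisOfTopLeSpanOfCardEqFinrank _ _ _
  have hy' : ι Q y ∈ span ℤ_[ℓ] (Set.range ⇑EB) := by rw [hEB]; exact hy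
  have hco := (EB.mem_span_iff_repr_mem ℤ_[ℓ] (ι Q y)).mp hy'
  have hexp : ι Q y = ∑ i, bV.repr y i • EB {i} := by
    conv_lhs => rw [← bV.sum_repr y]
    rw [map_sum]
    refine Finset.sum_congr rfl fun i _ => ?_
    rw [map_smul]
    congr 1
    have := congrFun hEB ({i} : Finset (Fin n))
    rw [this, cM_singleton, hbV]
  have hcoef : ∀ i : Fin n, EB.repr (ι Q y) {i} = bV.repr y i := by
    intro i
    rw [hexp, map_sum, Finsupp.finset_sum_apply]
    rw [Finset.sum_eq_single i]
    · rw [map_smul, Finsupp.smul_apply, Basis.repr_self, Finsupp.single_eq_same, smul_eq_mul,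
        mul_one]
    · intro j _ hji
      rw [map_smul, Finsupp.smul_apply, Basis.repr_self,
        Finsupp.single_eq_of_ne' (fun h => hji (Finset.singleton_injective h)), smul_zero]
    · intro h
      exact absurd (Finset.mem_univ i) h
  have hcoord : ∀ i, ∃ r : ℤ_[ℓ], bV.repr y i = (r : ℚ_[ℓ]) := by
    intro i
    obtain ⟨r, hr⟩ := hco {i}
    exact ⟨r, by rw [← hcoef i, ← hr]; rfl⟩
  choose r hr using hcoord
  have hyexp : y = ∑ i, r i • v i := by
    conv_lhs => rw [← bV.sum_repr y]
    refine Finset.sum_congr rfl fun i _ => ?_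
    rw [hr i, hbV i, hVsm]
  rw [hyexp]
  exact Submodule.sum_mem _ fun i _ => Submodule.smul_mem _ _ (hvL i)

lemma evenLat_subset_even (L : Submodule ℤ_[ℓ] V) :
    ∀ x, x ∈ evenCliffordOfLattice ℓ Q L → x ∈ even Q := by
  intro x hx
  have hx' : x ∈ Subring.closure
      (Set.range (fun r : ℤ_[ℓ] => algebraMap ℚ_[ℓ] (CliffordAlgebra Q) (r : ℚ_[ℓ])) ∪
        {c | ∃ a ∈ L, ∃ y ∈ L, c = ι Q a * ι Q y}) := hx
  clear hx
  induction hx' using Subring.closure_induction with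
  | mem c hc =>
    rcases hc with ⟨r, rfl⟩ | ⟨a, _, y, _, rfl⟩
    · exact Subalgebra.algebraMap_mem (even Q) _
    · have h := ι_mul_ι_mem_evenOdd_zero Q a y
      rw [← even_toSubmodule, Subalgebra.mem_toSubmodule] at h
      exact h
  | zero => exact zero_mem _
  | one => exact one_mem _
  | add a y _ _ ha hy => exact add_mem ha hy
  | neg a _ ha => exact neg_mem ha
  | mul a y _ _ ha hy => exact mul_mem ha hy

end Aux

/-- `GSpin(Λ) = GSpin(Λ ⊗ ℚ_ℓ) ∩ C⁺(Λ)ˣ`: for a unit `z` of the Clifford algebra,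
`z` lies in `C⁺(Λ)` together with its inverse and conjugation by `z` preserves `Λ`
if and only if `z` and its inverse lie in the even part, conjugation by `z` preserves
`Λ ⊗ ℚ_ℓ`, and `z` and its inverse lie in `C⁺(Λ)`. -/
theorem gspin_lattice_eq_gspin_rational_inter_units
    (ℓ : ℕ) [Fact (Nat.Prime ℓ)]
    (V : Type*) [AddCommGroup V] [Module ℚ_[ℓ] V] [FiniteDimensional ℚ_[ℓ] V]
    [Module ℤ_[ℓ] V] [IsScalarTower ℤ_[ℓ] ℚ_[ℓ] V]
    (Q : QuadraticForm ℚ_[ℓ] V)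
    (hnd : ∀ x : V, (∀ y : V, QuadraticMap.polar Q x y = 0) → x = 0)
    (L : Submodule ℤ_[ℓ] V) (hfree : Module.Free ℤ_[ℓ] ↥L) (hfin : Module.Finite ℤ_[ℓ] ↥L)
    (hfull : span ℚ_[ℓ] (L : Set V) = ⊤)
    (hQL : ∀ x ∈ L, ∃ r : ℤ_[ℓ], Q x = (r : ℚ_[ℓ]))
    (z : (CliffordAlgebra Q)ˣ) :
    ((↑z ∈ evenCliffordOfLattice ℓ Q L ∧ ↑z⁻¹ ∈ evenCliffordOfLattice ℓ Q L) ∧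
        {c | ∃ x ∈ L, c = ↑z * ι Q x * ↑z⁻¹} = ι Q '' (L : Set V)) ↔
      (((↑z : CliffordAlgebra Q) ∈ even Q ∧ (↑z⁻¹ : CliffordAlgebra Q) ∈ even Q) ∧
        {c | ∃ x : V, c = ↑z * ι Q x * ↑z⁻¹} = Set.range (ι Q) ∧
        (↑z ∈ evenCliffordOfLattice ℓ Q L ∧ ↑z⁻¹ ∈ evenCliffordOfLattice ℓ Q L)) := by
  constructor
  · rintro ⟨⟨hz, hzi⟩, hset⟩
    refine ⟨⟨evenLat_subset_even Q L _ hz, evenLat_subset_even Q L _ hzi⟩, ?_, hz, hzi⟩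
    set g : V →ₗ[ℚ_[ℓ]] CliffordAlgebra Q :=
      (LinearMap.mulRight ℚ_[ℓ] (↑z⁻¹ : CliffordAlgebra Q)).comp
        ((LinearMap.mulLeft ℚ_[ℓ] (↑z : CliffordAlgebra Q)).comp (ι Q)) with hgdef
    have hg : ∀ x : V, g x = ↑z * ι Q x * ↑z⁻¹ := fun x => rfl
    have himg : g '' (L : Set V) = ι Q '' (L : Set V) := by
      rw [← hset]
      ext c
      constructor
      · rintro ⟨x, hx, rfl⟩
        exact ⟨x, hx, (hg x)⟩
      · rintro ⟨x, hx, h⟩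
        exact ⟨x, hx, by rw [h, hg]⟩
    have hranges : LinearMap.range g = LinearMap.range (ι Q) := by
      rw [← Submodule.map_top g, ← hfull, Submodule.map_span, himg, ← Submodule.map_span,
        hfull, Submodule.map_top]
    ext c
    simp only [Set.mem_setOf_eq, Set.mem_range]
    constructor
    · rintro ⟨x, rfl⟩
      have h1 : g x ∈ LinearMap.range g := LinearMap.mem_range_self g x
      rw [hranges] at h1
      obtain ⟨u, hu⟩ := h1
      exact ⟨u, by rw [hu, hg]⟩
    · rintro ⟨u, rfl⟩
      have h1 : ι Q u ∈ LinearMap.range (ι Q) := LinearMap.mem_range_self _ u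
      rw [← hranges] at h1
      obtain ⟨x, hx⟩ := h1
      exact ⟨x, by rw [← hx, hg]⟩
  · rintro ⟨_, hratset, hz, hzi⟩
    refine ⟨⟨hz, hzi⟩, ?_⟩
    obtain ⟨N, hNeven, hNι, hNmul, hNext⟩ := key_extraction Q L hfree hfin hfull hQL
    have hzN : (↑z : CliffordAlgebra Q) ∈ N := hNeven hz
    have hziN : (↑z⁻¹ : CliffordAlgebra Q) ∈ N := hNeven hzi
    ext c
    simp only [Set.mem_setOf_eq, Set.mem_image, SetLike.mem_coe]
    constructor
    · rintro ⟨x, hx, rfl⟩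
      have hr : (↑z * ι Q x * ↑z⁻¹ : CliffordAlgebra Q) ∈ Set.range (ι Q) := by
        rw [← hratset]
        exact ⟨x, rfl⟩
      obtain ⟨u, hu⟩ := hr
      have huN : ι Q u ∈ N := by
        rw [hu, mul_assoc]
        exact hNmul _ hzN _ (hNmul _ (hNι x hx) _ hziN)
      exact ⟨u, hNext u huN, hu⟩
    · rintro ⟨u, hu, rfl⟩
      have h1 : ι Q u ∈ Set.range (ι Q) := ⟨u, rfl⟩
      rw [← hratset] at h1
      obtain ⟨x, hx⟩ := h1
      have hxval : ι Q x = ↑z⁻¹ * ι Q u * ↑z := by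
        rw [hx, mul_assoc (↑z : CliffordAlgebra Q) (ι Q x) (↑z⁻¹ : CliffordAlgebra Q),
          Units.inv_mul_cancel_left, mul_assoc, Units.inv_mul, mul_one]
      have hxN : ι Q x ∈ N := by
        rw [hxval, mul_assoc]
        exact hNmul _ hziN _ (hNmul _ (hNι u hu) _ hzN)
      exact ⟨x, hNext x hxN, hx⟩
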